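/- Let λ ∈ ℝ and let W ∈ Mat₂ₓ₂(ℂ) be such that S := W − W† is invertible. Define the 4×4 block matrix X := iλ·[[(W + W†)S⁻¹, −2 W S⁻¹ W†], [2 S⁻¹, −I − 2 S⁻¹ W†]]. Then: (a) Tr X = 0; (b) X² = −λ²·I₄; and (c) X†η + ηX = 0, where η = i·[[0, I₂], [−I₂, 0]]. Hence the momentum map J_λ of the holomorphic model takes values in the Lie algebra su(2,2), on the orbit of elements with eigenvalues ±iλ. -/
import Mathlib


open Matrix

/-- For real `λ` and `W` with `S = W − Wᴴ` invertible, the block matrix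
`X = iλ [[(W+Wᴴ)S⁻¹, −2WS⁻¹Wᴴ],[2S⁻¹, −I − 2S⁻¹Wᴴ]]` (the value `J_λ(W)` of the
momentum map of the holomorphic model) satisfies (a) `Tr X = 0`,
(b) `X² = −λ² I₄`, and (c) `Xᴴ η + η X = 0` where `η = i[[0,I],[−I,0]]`; hence
`X ∈ su(2,2)` lies on the orbit with eigenvalues `±iλ`. -/
theorem momentum_map_in_su22 (lam : ℝ) (W : Matrix (Fin 2) (Fin 2) ℂ)
    (hS : IsUnit (W - Wᴴ)) :
    let S : Matrix (Fin 2) (Fin 2) ℂ := W - Wᴴ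
    let X : Matrix (Fin 2 ⊕ Fin 2) (Fin 2 ⊕ Fin 2) ℂ :=
      (Complex.I * (lam : ℂ)) •
        fromBlocks ((W + Wᴴ) * S⁻¹) (-((2 : ℂ) • (W * S⁻¹ * Wᴴ)))
          ((2 : ℂ) • S⁻¹) (-(1 + (2 : ℂ) • (S⁻¹ * Wᴴ)))
    let η : Matrix (Fin 2 ⊕ Fin 2) (Fin 2 ⊕ Fin 2) ℂ :=
      Complex.I • fromBlocks 0 1 (-1) 0
    X.trace = 0 ∧
    X * X = (-((lam : ℂ) ^ 2)) • (1 : Matrix (Fin 2 ⊕ Fin 2) (Fin 2 ⊕ Fin 2) ℂ) ∧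
    Xᴴ * η + η * X = 0 := by
  intro S X η
  have hdet : IsUnit S.det := (Matrix.isUnit_iff_isUnit_det _).mp hS
  have h1 : S * S⁻¹ = 1 := Matrix.mul_nonsing_inv _ hdet
  have h2 : S⁻¹ * S = 1 := Matrix.nonsing_inv_mul _ hdet
  have hWr : W = S + Wᴴ := by simp [S]
  have hWS : W * S⁻¹ = 1 + Wᴴ * S⁻¹ := by
    conv_lhs => rw [hWr]
    rw [Matrix.add_mul, h1]
  have hSW : S⁻¹ * W = 1 + S⁻¹ * Wᴴ := by
    conv_lhs => rw [hWr]
    rw [Matrix.mul_add, h2]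
  have hSH : Sᴴ = -S := by
    show (W - Wᴴ)ᴴ = -(W - Wᴴ)
    simp [Matrix.conjTranspose_sub]
  have hTH : (S⁻¹)ᴴ = -S⁻¹ := by
    rw [Matrix.conjTranspose_nonsing_inv, hSH]
    exact Matrix.inv_eq_right_inv (by simp [h1])
  have tfb : ∀ (P Q R T : Matrix (Fin 2) (Fin 2) ℂ),
      (fromBlocks P Q R T).trace = P.trace + T.trace := by
    intro P Q R T
    simp [Matrix.trace, Fintype.sum_sum_type, Matrix.diag, Matrix.fromBlocks]
  refine ⟨?_, ?_, ?_⟩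
  · -- trace
    show ((Complex.I * (lam : ℂ)) •
        fromBlocks ((W + Wᴴ) * S⁻¹) (-((2 : ℂ) • (W * S⁻¹ * Wᴴ)))
          ((2 : ℂ) • S⁻¹) (-(1 + (2 : ℂ) • (S⁻¹ * Wᴴ)))).trace = 0
    rw [Matrix.trace_smul, tfb]
    have key : ((W + Wᴴ) * S⁻¹).trace + (-(1 + (2 : ℂ) • (S⁻¹ * Wᴴ))).trace = 0 := by
      rw [Matrix.add_mul, hWS]
      simp [Matrix.trace_add, Matrix.trace_smul, Matrix.trace_mul_comm Wᴴ S⁻¹]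
      ring
    rw [key, smul_zero]
  · -- X * X
    have e11 : ((W + Wᴴ) * S⁻¹) * ((W + Wᴴ) * S⁻¹)
        + (-((2:ℂ) • (W * S⁻¹ * Wᴴ))) * ((2:ℂ) • S⁻¹) = 1 := by
      simp only [Matrix.add_mul, hWS, two_smul]
      noncomm_ring
    have e12 : ((W + Wᴴ) * S⁻¹) * (-((2:ℂ) • (W * S⁻¹ * Wᴴ)))
        + (-((2:ℂ) • (W * S⁻¹ * Wᴴ))) * (-(1 + (2:ℂ) • (S⁻¹ * Wᴴ))) = 0 := by
      simp only [Matrix.add_mul, hWS, two_smul]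
      noncomm_ring
    have e21 : ((2:ℂ) • S⁻¹) * ((W + Wᴴ) * S⁻¹)
        + (-(1 + (2:ℂ) • (S⁻¹ * Wᴴ))) * ((2:ℂ) • S⁻¹) = 0 := by
      simp only [Matrix.add_mul, hWS, two_smul]
      noncomm_ring
    have e22 : ((2:ℂ) • S⁻¹) * (-((2:ℂ) • (W * S⁻¹ * Wᴴ)))
        + (-(1 + (2:ℂ) • (S⁻¹ * Wᴴ))) * (-(1 + (2:ℂ) • (S⁻¹ * Wᴴ))) = 1 := by
      simp only [Matrix.add_mul, hWS, two_smul]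
      noncomm_ring
    have hs : Complex.I * (lam : ℂ) * (Complex.I * (lam : ℂ)) = -((lam : ℂ) ^ 2) := by
      rw [mul_mul_mul_comm, Complex.I_mul_I]
      ring
    show ((Complex.I * (lam : ℂ)) • fromBlocks _ _ _ _) *
        ((Complex.I * (lam : ℂ)) • fromBlocks _ _ _ _) = _
    rw [Matrix.smul_mul, Matrix.mul_smul, smul_smul, Matrix.fromBlocks_multiply,
      e11, e12, e21, e22, Matrix.fromBlocks_one, hs]
  · -- Xᴴ η + η X = 0
    have hAH : ((W + Wᴴ) * S⁻¹)ᴴ = -(1 + (2:ℂ) • (S⁻¹ * Wᴴ)) := by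
      rw [Matrix.conjTranspose_mul, Matrix.conjTranspose_add, hTH,
        Matrix.conjTranspose_conjTranspose, Matrix.neg_mul, Matrix.mul_add, hSW]
      simp only [two_smul]
      abel
    have hDH : (-(1 + (2:ℂ) • (S⁻¹ * Wᴴ)))ᴴ = (W + Wᴴ) * S⁻¹ := by
      rw [← hAH, Matrix.conjTranspose_conjTranspose]
    have hCH : ((2:ℂ) • S⁻¹)ᴴ = -((2:ℂ) • S⁻¹) := by
      rw [Matrix.conjTranspose_smul, hTH]
      simp
    have hBH : (-((2:ℂ) • (W * S⁻¹ * Wᴴ)))ᴴ = -(-((2:ℂ) • (W * S⁻¹ * Wᴴ))) := by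
      rw [Matrix.conjTranspose_neg, Matrix.conjTranspose_smul, Matrix.conjTranspose_mul,
        Matrix.conjTranspose_mul, hTH, Matrix.conjTranspose_conjTranspose, neg_neg]
      norm_num [Matrix.mul_neg, Matrix.neg_mul, smul_neg, Matrix.mul_assoc]
    have hMF : (fromBlocks ((W + Wᴴ) * S⁻¹) (-((2:ℂ) • (W * S⁻¹ * Wᴴ)))
          ((2:ℂ) • S⁻¹) (-(1 + (2:ℂ) • (S⁻¹ * Wᴴ))))ᴴ *
          fromBlocks 0 1 (-1) 0 =
        fromBlocks 0 1 (-1) 0 *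
          fromBlocks ((W + Wᴴ) * S⁻¹) (-((2:ℂ) • (W * S⁻¹ * Wᴴ)))
            ((2:ℂ) • S⁻¹) (-(1 + (2:ℂ) • (S⁻¹ * Wᴴ))) := by
      rw [Matrix.fromBlocks_conjTranspose, Matrix.fromBlocks_multiply,
        Matrix.fromBlocks_multiply, hAH, hBH, hCH, hDH]
      simp [neg_add, smul_neg, Matrix.add_mul]
    have hscal : star (Complex.I * (lam : ℂ)) = -(Complex.I * (lam : ℂ)) := by
      simp [Complex.star_def, Complex.conj_ofReal]
    show (((Complex.I * (lam : ℂ)) • fromBlocks _ _ _ _)ᴴ) *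
        (Complex.I • fromBlocks 0 1 (-1) 0) +
        (Complex.I • fromBlocks 0 1 (-1) 0) *
        ((Complex.I * (lam : ℂ)) • fromBlocks _ _ _ _) = 0
    rw [Matrix.conjTranspose_smul, hscal, Matrix.smul_mul, Matrix.mul_smul,
      Matrix.smul_mul, Matrix.mul_smul, smul_smul, smul_smul, hMF, ← add_smul]
    convert zero_smul ℂ _
    ring
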